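/- If f : (M,F) → (M′,F′) is a foliated smooth map between Riemannian foliations of closed manifolds with bundle-like metrics, then P_a f* P_a′ commutes with the antibasic differentials: P_a f* P_a′ d_a′ = d_a P_a f* P_a′, where d_a = P_a d and d_a′ = P_a′ d′. Hence P_a f* P_a′ induces a linear map on d_a-antibasic cohomology. -/
import Mathlib


/-- If `f : (M,F) → (M′,F′)` is a foliated map (so its pullback `φ = f*` commutes with
`d` and preserves basic forms, `φ P_b′ = P_b φ P_b′`), then `P_a φ P_a′` intertwines
the antibasic differentials: `(P_a f* P_a′) d_a′ = d_a (P_a f* P_a′)` with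
`d_a = P_a d` and `d_a′ = P_a′ d′`; hence it maps `ker d_a′` into `ker d_a` and
`im d_a′` into `im d_a`, inducing a linear map on antibasic cohomology. -/
theorem stmt_16 {V V' : Type*} [AddCommGroup V] [Module ℝ V]
    [AddCommGroup V'] [Module ℝ V']
    (d Pa Pb : V →ₗ[ℝ] V) (d' Pa' Pb' ε' : V' →ₗ[ℝ] V')
    (hPb : Pb ∘ₗ Pb = Pb) (hPa : Pa = LinearMap.id - Pb)
    (hPb' : Pb' ∘ₗ Pb' = Pb') (hPa' : Pa' = LinearMap.id - Pb')
    (φ : V' →ₗ[ℝ] V)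
    (hφd : φ ∘ₗ d' = d ∘ₗ φ)
    (hφb : φ ∘ₗ Pb' = Pb ∘ₗ (φ ∘ₗ Pb'))
    (hPa'd : Pa' ∘ₗ d' = d' ∘ₗ Pa' + Pb' ∘ₗ ε')
    (hPad : Pa ∘ₗ d ∘ₗ Pa = Pa ∘ₗ d) :
    ((Pa ∘ₗ φ ∘ₗ Pa') ∘ₗ (Pa' ∘ₗ d') = (Pa ∘ₗ d) ∘ₗ (Pa ∘ₗ φ ∘ₗ Pa')) ∧
    (∀ x : V', Pa' (d' x) = 0 → Pa (d (Pa (φ (Pa' x)))) = 0) ∧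
    (∀ y : V', ∃ z : V, Pa (φ (Pa' (Pa' (d' y)))) = Pa (d (Pa z))) := by

  -- Pointwise auxiliary facts
  have hPaPb : ∀ v : V, Pa (Pb v) = 0 := by
    intro v
    have := congrArg (fun g => g v) hPb
    simp only [LinearMap.comp_apply] at this
    simp [hPa, this]
  have hPa'Pa' : ∀ v : V', Pa' (Pa' v) = Pa' v := by
    intro v
    have := congrArg (fun g => g v) hPb'
    simp only [LinearMap.comp_apply] at this
    simp [hPa', this, sub_sub_cancel]
  have hφPb' : ∀ v : V', Pa (φ (Pb' v)) = 0 := by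
    intro v
    have := congrArg (fun g => g v) hφb
    simp only [LinearMap.comp_apply] at this
    rw [this, hPaPb]
  have hPadv : ∀ v : V, Pa (d (Pa v)) = Pa (d v) := by
    intro v
    have := congrArg (fun g => g v) hPad
    simpa [LinearMap.comp_apply] using this
  have hφdv : ∀ v : V', φ (d' v) = d (φ v) := by
    intro v
    have := congrArg (fun g => g v) hφd
    simpa [LinearMap.comp_apply] using this
  have hPa'dv : ∀ v : V', Pa' (d' v) = d' (Pa' v) + Pb' (ε' v) := by
    intro v
    have := congrArg (fun g => g v) hPa'd
    simpa [LinearMap.comp_apply] using this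
  have key : ∀ v : V', Pa (φ (Pa' (Pa' (d' v)))) = Pa (d (Pa (φ (Pa' v)))) := by
    intro v
    rw [hPa'Pa', hPa'dv, map_add, map_add, hφPb', add_zero, hφdv, hPadv]
  constructor
  · ext v
    simp only [LinearMap.comp_apply]
    exact key v
  constructor
  · intro x hx
    have := key x
    rw [hx] at this
    simpa using this.symm
  · intro y
    exact ⟨φ (Pa' y), key y⟩
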